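/- For every term rewrite system R over a first-order language, if asymmetric sequent calculus modulo R has the cut elimination property (every provable sequent has a proof not using the Cut rule), then R is confluent on terms. -/
import Mathlib


open Relation

/-! ## First-order terms and propositions

We fix a first-order language given by a type `F` of function symbols with
arities `ar : F → ℕ` and a type `P` of predicate symbols with arities
`par : P → ℕ`.  Variables are named by natural numbers. -/

/-- First-order terms over function symbols `F` with arities `ar`. -/
inductive Tm (F : Type*) (ar : F → ℕ) : Type _
  | var : ℕ → Tm F ar
  | func : (f : F) → (Fin (ar f) → Tm F ar) → Tm F ar

variable {F : Type*} {ar : F → ℕ}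

/-- Application of a substitution `θ` to a term. -/
def Tm.subst (θ : ℕ → Tm F ar) : Tm F ar → Tm F ar
  | .var n => θ n
  | .func f ts => .func f (fun i => (ts i).subst θ)

/-- Free variables of a term. -/
def Tm.fv : Tm F ar → Set ℕ
  | .var n => {n}
  | .func _ ts => ⋃ i, (ts i).fv

/-- The substitution replacing the single variable `x` by the term `t`. -/
def Tm.subst1 (x : ℕ) (t : Tm F ar) (u : Tm F ar) : Tm F ar :=
  u.subst (fun n => if n = x then t else .var n)

/-- One-step rewriting of terms by a rewrite system `R` (a set of pairs of terms):
the smallest relation compatible with the structure of terms such that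
`θl →¹ θr` for every rule `(l, r) ∈ R` and every substitution `θ`. -/
inductive TmRw (R : Set (Tm F ar × Tm F ar)) : Tm F ar → Tm F ar → Prop
  | rule (l r : Tm F ar) (θ : ℕ → Tm F ar) (h : (l, r) ∈ R) :
      TmRw R (l.subst θ) (r.subst θ)
  | congr (f : F) (ts : Fin (ar f) → Tm F ar) (i : Fin (ar f)) (u : Tm F ar)
      (h : TmRw R (ts i) u) :
      TmRw R (.func f ts) (.func f (Function.update ts i u))

/-- First-order propositions, built from atomic propositions by
`⇒`, `∧`, `∨`, `⊥`, `∀` and `∃`. -/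
inductive Fm (F : Type*) (ar : F → ℕ) (P : Type*) (par : P → ℕ) : Type _
  | atom : (p : P) → (Fin (par p) → Tm F ar) → Fm F ar P par
  | imp : Fm F ar P par → Fm F ar P par → Fm F ar P par
  | and : Fm F ar P par → Fm F ar P par → Fm F ar P par
  | or : Fm F ar P par → Fm F ar P par → Fm F ar P par
  | bot : Fm F ar P par
  | all : ℕ → Fm F ar P par → Fm F ar P par
  | ex : ℕ → Fm F ar P par → Fm F ar P par

variable {P : Type*} {par : P → ℕ}

/-- Free variables of a proposition. -/
def Fm.fv : Fm F ar P par → Set ℕ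
  | .atom _ ts => ⋃ i, (ts i).fv
  | .imp A B => A.fv ∪ B.fv
  | .and A B => A.fv ∪ B.fv
  | .or A B => A.fv ∪ B.fv
  | .bot => ∅
  | .all x A => A.fv \ {x}
  | .ex x A => A.fv \ {x}

/-- Substitution `[t/x]A` of the term `t` for the variable `x` in the
proposition `A`. -/
def Fm.subst1 (x : ℕ) (t : Tm F ar) : Fm F ar P par → Fm F ar P par
  | .atom p ts => .atom p (fun i => Tm.subst1 x t (ts i))
  | .imp A B => .imp (A.subst1 x t) (B.subst1 x t)
  | .and A B => .and (A.subst1 x t) (B.subst1 x t)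
  | .or A B => .or (A.subst1 x t) (B.subst1 x t)
  | .bot => .bot
  | .all y A => if y = x then .all y A else .all y (A.subst1 x t)
  | .ex y A => if y = x then .ex y A else .ex y (A.subst1 x t)

/-- One-step rewriting of propositions: the smallest relation compatible with
the structure of propositions extending one-step rewriting of terms.  Rewriting
does not change the logical structure of a proposition. -/
inductive FmRw (R : Set (Tm F ar × Tm F ar)) : Fm F ar P par → Fm F ar P par → Prop
  | atom (p : P) (ts : Fin (par p) → Tm F ar) (i : Fin (par p)) (u : Tm F ar)
      (h : TmRw R (ts i) u) :
      FmRw R (.atom p ts) (.atom p (Function.update ts i u))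
  | impL {A A' B : Fm F ar P par} (h : FmRw R A A') : FmRw R (.imp A B) (.imp A' B)
  | impR {A B B' : Fm F ar P par} (h : FmRw R B B') : FmRw R (.imp A B) (.imp A B')
  | andL {A A' B : Fm F ar P par} (h : FmRw R A A') : FmRw R (.and A B) (.and A' B)
  | andR {A B B' : Fm F ar P par} (h : FmRw R B B') : FmRw R (.and A B) (.and A B')
  | orL {A A' B : Fm F ar P par} (h : FmRw R A A') : FmRw R (.or A B) (.or A' B)
  | orR {A B B' : Fm F ar P par} (h : FmRw R B B') : FmRw R (.or A B) (.or A B')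
  | all {x : ℕ} {A A' : Fm F ar P par} (h : FmRw R A A') : FmRw R (.all x A) (.all x A')
  | ex {x : ℕ} {A A' : Fm F ar P par} (h : FmRw R A A') : FmRw R (.ex x A) (.ex x A')

/-! ## Asymmetric sequent calculus modulo `R`

Sequents are pairs of finite multisets of propositions.  The Boolean index
records whether the Cut rule is allowed: `Der R true Γ Δ` is provability in the
full calculus, `Der R false Γ Δ` is provability by a proof not using the Cut
rule. -/

inductive Der (R : Set (Tm F ar × Tm F ar)) :
    Bool → Multiset (Fm F ar P par) → Multiset (Fm F ar P par) → Prop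
  | ax {b : Bool} (Γ Δ : Multiset (Fm F ar P par)) (A₁ A₂ A : Fm F ar P par)
      (h₁ : ReflTransGen (FmRw R) A₁ A) (h₂ : ReflTransGen (FmRw R) A₂ A) :
      Der R b (A₁ ::ₘ Γ) (A₂ ::ₘ Δ)
  | cut (Γ Δ : Multiset (Fm F ar P par)) (C C₁ C₂ : Fm F ar P par)
      (h₁ : ReflTransGen (FmRw R) C C₁) (h₂ : ReflTransGen (FmRw R) C C₂)
      (p₁ : Der R true Γ (C₁ ::ₘ Δ)) (p₂ : Der R true (C₂ ::ₘ Γ) Δ) :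
      Der R true Γ Δ
  | contrL {b : Bool} (Γ Δ : Multiset (Fm F ar P par)) (A A₁ A₂ : Fm F ar P par)
      (h₁ : ReflTransGen (FmRw R) A A₁) (h₂ : ReflTransGen (FmRw R) A A₂)
      (p : Der R b (A₁ ::ₘ A₂ ::ₘ Γ) Δ) :
      Der R b (A ::ₘ Γ) Δ
  | contrR {b : Bool} (Γ Δ : Multiset (Fm F ar P par)) (A A₁ A₂ : Fm F ar P par)
      (h₁ : ReflTransGen (FmRw R) A A₁) (h₂ : ReflTransGen (FmRw R) A A₂)
      (p : Der R b Γ (A₁ ::ₘ A₂ ::ₘ Δ)) :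
      Der R b Γ (A ::ₘ Δ)
  | weakL {b : Bool} (Γ Δ : Multiset (Fm F ar P par)) (A : Fm F ar P par)
      (p : Der R b Γ Δ) :
      Der R b (A ::ₘ Γ) Δ
  | weakR {b : Bool} (Γ Δ : Multiset (Fm F ar P par)) (A : Fm F ar P par)
      (p : Der R b Γ Δ) :
      Der R b Γ (A ::ₘ Δ)
  | impL {b : Bool} (Γ Δ : Multiset (Fm F ar P par)) (A B C : Fm F ar P par)
      (h : ReflTransGen (FmRw R) C (.imp A B))
      (p₁ : Der R b Γ (A ::ₘ Δ)) (p₂ : Der R b (B ::ₘ Γ) Δ) :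
      Der R b (C ::ₘ Γ) Δ
  | impR {b : Bool} (Γ Δ : Multiset (Fm F ar P par)) (A B C : Fm F ar P par)
      (h : ReflTransGen (FmRw R) C (.imp A B))
      (p : Der R b (A ::ₘ Γ) (B ::ₘ Δ)) :
      Der R b Γ (C ::ₘ Δ)
  | andL {b : Bool} (Γ Δ : Multiset (Fm F ar P par)) (A B C : Fm F ar P par)
      (h : ReflTransGen (FmRw R) C (.and A B))
      (p : Der R b (A ::ₘ B ::ₘ Γ) Δ) :
      Der R b (C ::ₘ Γ) Δ
  | andR {b : Bool} (Γ Δ : Multiset (Fm F ar P par)) (A B C : Fm F ar P par)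
      (h : ReflTransGen (FmRw R) C (.and A B))
      (p₁ : Der R b Γ (A ::ₘ Δ)) (p₂ : Der R b Γ (B ::ₘ Δ)) :
      Der R b Γ (C ::ₘ Δ)
  | orL {b : Bool} (Γ Δ : Multiset (Fm F ar P par)) (A B C : Fm F ar P par)
      (h : ReflTransGen (FmRw R) C (.or A B))
      (p₁ : Der R b (A ::ₘ Γ) Δ) (p₂ : Der R b (B ::ₘ Γ) Δ) :
      Der R b (C ::ₘ Γ) Δ
  | orR {b : Bool} (Γ Δ : Multiset (Fm F ar P par)) (A B C : Fm F ar P par)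
      (h : ReflTransGen (FmRw R) C (.or A B))
      (p : Der R b Γ (A ::ₘ B ::ₘ Δ)) :
      Der R b Γ (C ::ₘ Δ)
  | botL {b : Bool} (Γ Δ : Multiset (Fm F ar P par)) (A : Fm F ar P par)
      (h : ReflTransGen (FmRw R) A .bot) :
      Der R b (A ::ₘ Γ) Δ
  | allL {b : Bool} (Γ Δ : Multiset (Fm F ar P par)) (x : ℕ) (A B : Fm F ar P par)
      (t : Tm F ar)
      (h : ReflTransGen (FmRw R) B (.all x A))
      (p : Der R b ((A.subst1 x t) ::ₘ Γ) Δ) :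
      Der R b (B ::ₘ Γ) Δ
  | allR {b : Bool} (Γ Δ : Multiset (Fm F ar P par)) (x : ℕ) (A B : Fm F ar P par)
      (h : ReflTransGen (FmRw R) B (.all x A))
      (hΓ : ∀ C ∈ Γ, x ∉ Fm.fv C) (hΔ : ∀ C ∈ Δ, x ∉ Fm.fv C)
      (p : Der R b Γ (A ::ₘ Δ)) :
      Der R b Γ (B ::ₘ Δ)
  | exL {b : Bool} (Γ Δ : Multiset (Fm F ar P par)) (x : ℕ) (A B : Fm F ar P par)
      (h : ReflTransGen (FmRw R) B (.ex x A))
      (hΓ : ∀ C ∈ Γ, x ∉ Fm.fv C) (hΔ : ∀ C ∈ Δ, x ∉ Fm.fv C)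
      (p : Der R b (A ::ₘ Γ) Δ) :
      Der R b (B ::ₘ Γ) Δ
  | exR {b : Bool} (Γ Δ : Multiset (Fm F ar P par)) (x : ℕ) (A B : Fm F ar P par)
      (t : Tm F ar)
      (h : ReflTransGen (FmRw R) B (.ex x A))
      (p : Der R b Γ ((A.subst1 x t) ::ₘ Δ)) :
      Der R b Γ (B ::ₘ Δ)

/-- A rewrite system `R` is confluent on terms. -/
def TmConfluent (R : Set (Tm F ar × Tm F ar)) : Prop :=
  ∀ t u v : Tm F ar, ReflTransGen (TmRw R) t u → ReflTransGen (TmRw R) t v →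
    ∃ w, ReflTransGen (TmRw R) u w ∧ ReflTransGen (TmRw R) v w

section Aux

variable {P : Type*} {par : P → ℕ}

/-- A proposition is atomic. -/
def Fm.isAtom : Fm F ar P par → Prop
  | .atom _ _ => True
  | _ => False

lemma FmRw.isAtom_of {R : Set (Tm F ar × Tm F ar)} {A B : Fm F ar P par}
    (h : FmRw R A B) (hA : A.isAtom) : B.isAtom := by
  cases h <;> simp [Fm.isAtom] at hA ⊢

lemma rtg_isAtom {R : Set (Tm F ar × Tm F ar)} {A B : Fm F ar P par}
    (h : ReflTransGen (FmRw R) A B) (hA : A.isAtom) : B.isAtom := by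
  induction h with
  | refl => exact hA
  | tail _ h₂ ih => exact h₂.isAtom_of ih

lemma atom_rtg {R : Set (Tm F ar × Tm F ar)} {p : P} {ts : Fin (par p) → Tm F ar}
    {D : Fm F ar P par} (h : ReflTransGen (FmRw R) (.atom p ts) D) :
    ∃ ts', D = .atom p ts' ∧ ∀ i, ReflTransGen (TmRw R) (ts i) (ts' i) := by
  induction h with
  | refl => exact ⟨ts, rfl, fun _ => .refl⟩
  | tail _ h₂ ih =>
    obtain ⟨ts', rfl, hts⟩ := ih
    cases h₂ with
    | atom _ _ i u hu =>
      refine ⟨Function.update ts' i u, rfl, fun j => ?_⟩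
      rcases eq_or_ne j i with rfl | hne
      · simpa using (hts j).tail hu
      · rw [Function.update_of_ne hne]; exact hts j

lemma pat_rtg {R : Set (Tm F ar × Tm F ar)} {p : P} (hp : par p = 1) {t u : Tm F ar}
    (h : ReflTransGen (TmRw R) t u) :
    ReflTransGen (FmRw R) (.atom p fun _ => t) (.atom p (fun _ => u) : Fm F ar P par) := by
  induction h with
  | refl => exact .refl
  | tail _ h₂ ih =>
    rename_i b c _
    have hone : ∀ j k : Fin (par p), j = k := fun j k =>
      Fin.ext (by have := j.isLt; have := k.isLt; omega)
    have i₀ : Fin (par p) := ⟨0, by omega⟩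
    have hupd : Function.update (fun _ : Fin (par p) => b) i₀ c = fun _ => c := by
      funext j
      rw [hone j i₀]; simp
    exact ih.tail (hupd ▸ FmRw.atom p (fun _ => b) i₀ c h₂)

/-- Key lemma: a cut-free proof of a sequent of atomic propositions yields a pair
of propositions on each side with a common reduct. -/
lemma key_atomic {R : Set (Tm F ar × Tm F ar)} :
    ∀ {b : Bool} {Γ Δ : Multiset (Fm F ar P par)}, Der R b Γ Δ → b = false →
    (∀ A ∈ Γ, A.isAtom) → (∀ B ∈ Δ, B.isAtom) →
    ∃ A ∈ Γ, ∃ B ∈ Δ, ∃ C, ReflTransGen (FmRw R) A C ∧ ReflTransGen (FmRw R) B C := by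
  intro b Γ Δ h
  induction h with
  | ax Γ Δ A₁ A₂ A h₁ h₂ =>
    intro _ _ _
    exact ⟨A₁, Multiset.mem_cons_self _ _, A₂, Multiset.mem_cons_self _ _, A, h₁, h₂⟩
  | cut Γ Δ C C₁ C₂ h₁ h₂ p₁ p₂ ih₁ ih₂ => intro hb; simp at hb
  | contrL Γ Δ A A₁ A₂ h₁ h₂ p ih =>
    intro hb hΓ hΔ
    have hA : A.isAtom := hΓ A (Multiset.mem_cons_self _ _)
    have hΓ' : ∀ X ∈ A₁ ::ₘ A₂ ::ₘ Γ, X.isAtom := by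
      intro X hX
      rcases Multiset.mem_cons.mp hX with rfl | hX
      · exact rtg_isAtom h₁ hA
      rcases Multiset.mem_cons.mp hX with rfl | hX
      · exact rtg_isAtom h₂ hA
      · exact hΓ X (Multiset.mem_cons_of_mem hX)
    obtain ⟨X, hX, B, hB, C, hXC, hBC⟩ := ih hb hΓ' hΔ
    rcases Multiset.mem_cons.mp hX with rfl | hX
    · exact ⟨A, Multiset.mem_cons_self _ _, B, hB, C, h₁.trans hXC, hBC⟩
    rcases Multiset.mem_cons.mp hX with rfl | hX
    · exact ⟨A, Multiset.mem_cons_self _ _, B, hB, C, h₂.trans hXC, hBC⟩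
    · exact ⟨X, Multiset.mem_cons_of_mem hX, B, hB, C, hXC, hBC⟩
  | contrR Γ Δ A A₁ A₂ h₁ h₂ p ih =>
    intro hb hΓ hΔ
    have hA : A.isAtom := hΔ A (Multiset.mem_cons_self _ _)
    have hΔ' : ∀ X ∈ A₁ ::ₘ A₂ ::ₘ Δ, X.isAtom := by
      intro X hX
      rcases Multiset.mem_cons.mp hX with rfl | hX
      · exact rtg_isAtom h₁ hA
      rcases Multiset.mem_cons.mp hX with rfl | hX
      · exact rtg_isAtom h₂ hA
      · exact hΔ X (Multiset.mem_cons_of_mem hX)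
    obtain ⟨A', hA', X, hX, C, hAC, hXC⟩ := ih hb hΓ hΔ'
    rcases Multiset.mem_cons.mp hX with rfl | hX
    · exact ⟨A', hA', A, Multiset.mem_cons_self _ _, C, hAC, h₁.trans hXC⟩
    rcases Multiset.mem_cons.mp hX with rfl | hX
    · exact ⟨A', hA', A, Multiset.mem_cons_self _ _, C, hAC, h₂.trans hXC⟩
    · exact ⟨A', hA', X, Multiset.mem_cons_of_mem hX, C, hAC, hXC⟩
  | weakL Γ Δ A p ih =>
    intro hb hΓ hΔ
    obtain ⟨X, hX, B, hB, C, hXC, hBC⟩ :=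
      ih hb (fun X hX => hΓ X (Multiset.mem_cons_of_mem hX)) hΔ
    exact ⟨X, Multiset.mem_cons_of_mem hX, B, hB, C, hXC, hBC⟩
  | weakR Γ Δ A p ih =>
    intro hb hΓ hΔ
    obtain ⟨X, hX, B, hB, C, hXC, hBC⟩ :=
      ih hb hΓ (fun X hX => hΔ X (Multiset.mem_cons_of_mem hX))
    exact ⟨X, hX, B, Multiset.mem_cons_of_mem hB, C, hXC, hBC⟩
  | impL Γ Δ A B C h p₁ p₂ ih₁ ih₂ =>
    intro _ hΓ _
    have := rtg_isAtom h (hΓ C (Multiset.mem_cons_self _ _))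
    simp [Fm.isAtom] at this
  | impR Γ Δ A B C h p ih =>
    intro _ _ hΔ
    have := rtg_isAtom h (hΔ C (Multiset.mem_cons_self _ _))
    simp [Fm.isAtom] at this
  | andL Γ Δ A B C h p ih =>
    intro _ hΓ _
    have := rtg_isAtom h (hΓ C (Multiset.mem_cons_self _ _))
    simp [Fm.isAtom] at this
  | andR Γ Δ A B C h p₁ p₂ ih₁ ih₂ =>
    intro _ _ hΔ
    have := rtg_isAtom h (hΔ C (Multiset.mem_cons_self _ _))
    simp [Fm.isAtom] at this
  | orL Γ Δ A B C h p₁ p₂ ih₁ ih₂ =>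
    intro _ hΓ _
    have := rtg_isAtom h (hΓ C (Multiset.mem_cons_self _ _))
    simp [Fm.isAtom] at this
  | orR Γ Δ A B C h p ih =>
    intro _ _ hΔ
    have := rtg_isAtom h (hΔ C (Multiset.mem_cons_self _ _))
    simp [Fm.isAtom] at this
  | botL Γ Δ A h =>
    intro _ hΓ _
    have := rtg_isAtom h (hΓ A (Multiset.mem_cons_self _ _))
    simp [Fm.isAtom] at this
  | allL Γ Δ x A B t h p ih =>
    intro _ hΓ _
    have := rtg_isAtom h (hΓ B (Multiset.mem_cons_self _ _))
    simp [Fm.isAtom] at this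
  | allR Γ Δ x A B h hΓ' hΔ' p ih =>
    intro _ _ hΔ
    have := rtg_isAtom h (hΔ B (Multiset.mem_cons_self _ _))
    simp [Fm.isAtom] at this
  | exL Γ Δ x A B h hΓ' hΔ' p ih =>
    intro _ hΓ _
    have := rtg_isAtom h (hΓ B (Multiset.mem_cons_self _ _))
    simp [Fm.isAtom] at this
  | exR Γ Δ x A B t h p ih =>
    intro _ _ hΔ
    have := rtg_isAtom h (hΔ B (Multiset.mem_cons_self _ _))
    simp [Fm.isAtom] at this

end Aux

/--
For every term rewrite system `R` (a set of pairs of terms whose left-hand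
sides are not variables) over a language containing at least one unary
predicate symbol, if asymmetric sequent calculus modulo `R` has the cut
elimination property (every provable sequent has a proof not using the Cut
rule), then `R` is confluent on terms.
-/
theorem confluent_of_der_cut_elimination
    {F : Type*} {ar : F → ℕ} {P : Type*} {par : P → ℕ}
    (p₀ : P) (hp₀ : par p₀ = 1)
    (R : Set (Tm F ar × Tm F ar))
    (hvar : ∀ lr ∈ R, ∀ n : ℕ, lr.1 ≠ Tm.var n)
    (hce : ∀ Γ Δ : Multiset (Fm F ar P par), Der R true Γ Δ → Der R false Γ Δ) :
    TmConfluent R := by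
  intro t u v htu htv
  set Pu : Fm F ar P par := .atom p₀ (fun _ => u) with hPu
  set Pv : Fm F ar P par := .atom p₀ (fun _ => v) with hPv
  set Pt : Fm F ar P par := .atom p₀ (fun _ => t) with hPt
  have d : Der R true (Pu ::ₘ 0) (Pv ::ₘ 0) := by
    refine Der.cut _ _ Pt Pu Pv (pat_rtg hp₀ htu) (pat_rtg hp₀ htv) ?_ ?_
    · exact Der.ax 0 (Pv ::ₘ 0) Pu Pu Pu .refl .refl
    · exact Der.ax (Pu ::ₘ 0) 0 Pv Pv Pv .refl .refl
  have d' := hce _ _ d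
  have hatomΓ : ∀ A ∈ (Pu ::ₘ (0 : Multiset (Fm F ar P par))), A.isAtom := by
    intro A hA
    rcases Multiset.mem_cons.mp hA with rfl | hA
    · trivial
    · exact absurd hA (Multiset.notMem_zero _)
  have hatomΔ : ∀ A ∈ (Pv ::ₘ (0 : Multiset (Fm F ar P par))), A.isAtom := by
    intro A hA
    rcases Multiset.mem_cons.mp hA with rfl | hA
    · trivial
    · exact absurd hA (Multiset.notMem_zero _)
  obtain ⟨A, hA, B, hB, C, hAC, hBC⟩ := key_atomic d' rfl hatomΓ hatomΔ
  have hA' : A = Pu := by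
    rcases Multiset.mem_cons.mp hA with rfl | hA
    · rfl
    · exact absurd hA (Multiset.notMem_zero _)
  have hB' : B = Pv := by
    rcases Multiset.mem_cons.mp hB with rfl | hB
    · rfl
    · exact absurd hB (Multiset.notMem_zero _)
  subst hA' hB'
  obtain ⟨ts₁, rfl, h₁⟩ := atom_rtg hAC
  obtain ⟨ts₂, heq, h₂⟩ := atom_rtg hBC
  have hts : ts₁ = ts₂ := by
    have := (Fm.atom.injEq p₀ ts₁ p₀ ts₂).mp heq
    exact eq_of_heq this.2
  have i₀ : Fin (par p₀) := ⟨0, by omega⟩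
  exact ⟨ts₁ i₀, h₁ i₀, hts ▸ h₂ i₀⟩
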